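/- Let Ω ⊆ ℝ^n be an open set and θ : Ω → ℝ a continuously differentiable function whose gradient ∇θ is locally Lipschitz on Ω. Let K : Ω ⇒ S^n (the space of n×n real symmetric matrices) be a set-valued mapping that is nonempty-valued, compact-valued and upper semicontinuous, and suppose ∇θ is semismooth at a point x ∈ Ω with respect to K. Then θ(x+d) − θ(x) − ⟨∇θ(x), d⟩ − ½⟨d, Vd⟩ = o(‖d‖²) uniformly over V ∈ K(x+d) as d → 0; that is, for every ε > 0 there exists δ > 0 such that for all d with 0 < ‖d‖ < δ and x+d ∈ Ω, and for every V ∈ K(x+d), |θ(x+d) − θ(x) − ⟨∇θ(x), d⟩ − ½ dᵀVd| ≤ ε‖d‖². -/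

import Mathlib

open scoped RealInnerProductSpace
open Filter Metric Set

set_option maxHeartbeats 1000000 in
/-- second-order expansion for a `C¹` function `θ` whose gradient `g = ∇θ`
is locally Lipschitz on an open set `Ω ⊆ ℝⁿ` and semismooth at `x ∈ Ω` with respect to a
nonempty-, compact- and symmetric-matrix-valued, upper semicontinuous set-valued mapping
`K`.  Then `θ(x+d) − θ(x) − ⟨∇θ(x), d⟩ − ½⟨d, Vd⟩ = o(‖d‖²)` uniformly over
`V ∈ K(x+d)` as `d → 0`. -/
theorem stmt0 {n : ℕ}
    (Ω : Set (EuclideanSpace ℝ (Fin n))) (hΩ : IsOpen Ω)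
    (θ : EuclideanSpace ℝ (Fin n) → ℝ)
    (g : EuclideanSpace ℝ (Fin n) → EuclideanSpace ℝ (Fin n))
    -- θ is continuously differentiable on Ω with gradient g
    (hgrad : ∀ y ∈ Ω, HasGradientAt θ (g y) y)
    (hgcont : ContinuousOn g Ω)
    -- g = ∇θ is locally Lipschitz on Ω
    (hglip : ∀ y ∈ Ω, ∃ (L : NNReal) (r : ℝ), 0 < r ∧
      LipschitzOnWith L g (Metric.ball y r ∩ Ω))
    -- K is a nonempty-valued, compact-valued set-valued map into symmetric matrices
    (K : EuclideanSpace ℝ (Fin n) → Set (Matrix (Fin n) (Fin n) ℝ))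
    (hKne : ∀ y ∈ Ω, (K y).Nonempty)
    (hKcpt : ∀ y ∈ Ω, IsCompact (K y))
    (hKsymm : ∀ y ∈ Ω, ∀ V ∈ K y, V.IsSymm)
    -- K is upper semicontinuous on Ω
    (hKusc : ∀ y ∈ Ω, ∀ U : Set (Matrix (Fin n) (Fin n) ℝ), IsOpen U → K y ⊆ U →
      ∃ r > (0:ℝ), ∀ z ∈ Metric.ball y r ∩ Ω, K z ⊆ U)
    (x : EuclideanSpace ℝ (Fin n)) (hx : x ∈ Ω)
    -- g is directionally differentiable at x
    (hdd : ∀ h : EuclideanSpace ℝ (Fin n), ∃ Dg : EuclideanSpace ℝ (Fin n),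
      Filter.Tendsto (fun t : ℝ => t⁻¹ • (g (x + t • h) - g x))
        (nhdsWithin 0 (Set.Ioi (0:ℝ))) (nhds Dg))
    -- g is semismooth at x with respect to K:
    -- g(x+Δx) − g(x) − V·Δx = o(‖Δx‖) uniformly over V ∈ K(x+Δx)
    (hss : ∀ ε > (0:ℝ), ∃ δ > (0:ℝ), ∀ d : EuclideanSpace ℝ (Fin n),
      ‖d‖ < δ → x + d ∈ Ω → ∀ V ∈ K (x + d),
        ‖g (x + d) - g x - Matrix.toEuclideanLin V d‖ ≤ ε * ‖d‖) :
    ∀ ε > (0:ℝ), ∃ δ > (0:ℝ), ∀ d : EuclideanSpace ℝ (Fin n),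
      0 < ‖d‖ → ‖d‖ < δ → x + d ∈ Ω → ∀ V ∈ K (x + d),
        |θ (x + d) - θ x - ⟪g x, d⟫ - (1/2) * ⟪d, Matrix.toEuclideanLin V d⟫| ≤
          ε * ‖d‖^2 := by
  classical
  choose Dg hDg using hdd
  obtain ⟨L, r₀, hr₀, hlipr⟩ := hglip x hx
  obtain ⟨rΩ, hrΩ, hballΩ⟩ := Metric.isOpen_iff.mp hΩ x hx
  set r₁ : ℝ := min r₀ rΩ with hr₁def
  have hr₁ : 0 < r₁ := lt_min hr₀ hrΩ
  have hballsub : Metric.ball x r₁ ⊆ Ω := fun y hy =>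
    hballΩ (Metric.ball_subset_ball (min_le_right _ _) hy)
  have hlip : LipschitzOnWith L g (Metric.ball x r₁) := hlipr.mono
    (fun y hy => ⟨Metric.ball_subset_ball (min_le_left _ _) hy, hballsub hy⟩)
  -- Dg 0 = 0
  have hDg0 : Dg 0 = 0 := by
    refine tendsto_nhds_unique (hDg 0) ?_
    have : (fun t : ℝ => t⁻¹ • (g (x + t • (0:EuclideanSpace ℝ (Fin n))) - g x))
        = fun _ => (0:EuclideanSpace ℝ (Fin n)) := by
      funext t; simp
    rw [this]; exact tendsto_const_nhds
  -- positive homogeneity of Dg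
  have hDghom : ∀ c : ℝ, 0 < c → ∀ h, Dg (c • h) = c • Dg h := by
    intro c hc h
    refine tendsto_nhds_unique (hDg (c • h)) ?_
    have hmap : Tendsto (fun t : ℝ => t * c) (nhdsWithin 0 (Set.Ioi (0:ℝ)))
        (nhdsWithin 0 (Set.Ioi (0:ℝ))) := by
      rw [tendsto_nhdsWithin_iff]
      constructor
      · have h0 : Tendsto (fun t : ℝ => t * c) (nhds (0:ℝ)) (nhds (0 * c)) :=
          tendsto_id.mul_const c
        rw [zero_mul] at h0
        exact h0.mono_left nhdsWithin_le_nhds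
      · filter_upwards [self_mem_nhdsWithin] with t ht
        exact mul_pos ht hc
    have hcomp := ((hDg h).comp hmap).const_smul c
    refine hcomp.congr' ?_
    filter_upwards [self_mem_nhdsWithin] with t ht
    have ht' : (0:ℝ) < t := ht
    show c • ((t * c)⁻¹ • (g (x + (t * c) • h) - g x)) = t⁻¹ • (g (x + t • (c • h)) - g x)
    rw [smul_smul, smul_smul]
    congr 1
    rw [mul_inv]
    field_simp
  -- Dg is Lipschitz
  have hDglip : ∀ u v : EuclideanSpace ℝ (Fin n), ‖Dg u - Dg v‖ ≤ L * ‖u - v‖ := by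
    intro u v
    have htend : Tendsto (fun t : ℝ =>
        ‖(t⁻¹ • (g (x + t • u) - g x)) - (t⁻¹ • (g (x + t • v) - g x))‖)
        (nhdsWithin 0 (Set.Ioi (0:ℝ))) (nhds ‖Dg u - Dg v‖) := ((hDg u).sub (hDg v)).norm
    refine le_of_tendsto htend ?_
    have hcpos : 0 < r₁ / (max ‖u‖ ‖v‖ + 1) := by positivity
    filter_upwards [Ioo_mem_nhdsGT_of_mem (left_mem_Ico.mpr hcpos)] with t ht
    obtain ⟨ht0, htc⟩ := ht
    have hmax : 0 < max ‖u‖ ‖v‖ + 1 := by positivity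
    have htb : t * (max ‖u‖ ‖v‖ + 1) < r₁ := (lt_div_iff₀ hmax).mp htc
    have hmu : x + t • u ∈ Metric.ball x r₁ := by
      rw [Metric.mem_ball, dist_eq_norm, add_sub_cancel_left, norm_smul,
        Real.norm_eq_abs, abs_of_pos ht0]
      have : ‖u‖ ≤ max ‖u‖ ‖v‖ + 1 := le_trans (le_max_left _ _) (by linarith)
      nlinarith
    have hmv : x + t • v ∈ Metric.ball x r₁ := by
      rw [Metric.mem_ball, dist_eq_norm, add_sub_cancel_left, norm_smul,
        Real.norm_eq_abs, abs_of_pos ht0]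
      have : ‖v‖ ≤ max ‖u‖ ‖v‖ + 1 := le_trans (le_max_right _ _) (by linarith)
      nlinarith
    have hd := hlip.dist_le_mul _ hmu _ hmv
    rw [dist_eq_norm, dist_eq_norm] at hd
    have hd2 : ‖x + t • u - (x + t • v)‖ = t * ‖u - v‖ := by
      rw [show x + t • u - (x + t • v) = t • (u - v) by rw [smul_sub]; abel,
        norm_smul, Real.norm_eq_abs, abs_of_pos ht0]
    rw [hd2] at hd
    rw [← smul_sub, show g (x + t • u) - g x - (g (x + t • v) - g x)
      = g (x + t • u) - g (x + t • v) by abel, norm_smul, Real.norm_eq_abs,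
      abs_of_pos (inv_pos.mpr ht0)]
    calc t⁻¹ * ‖g (x + t • u) - g (x + t • v)‖ ≤ t⁻¹ * ((L:ℝ) * (t * ‖u - v‖)) := by
          exact mul_le_mul_of_nonneg_left hd (by positivity)
      _ = (L:ℝ) * ‖u - v‖ := by field_simp
  -- uniform Bouligand differentiability (Shapiro)
  have hA : ∀ ε : ℝ, 0 < ε → ∃ δ > (0:ℝ), ∀ h : EuclideanSpace ℝ (Fin n),
      ‖h‖ < δ → ‖g (x + h) - g x - Dg h‖ ≤ ε * ‖h‖ := by
    intro ε hε
    by_contra hcon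
    push_neg at hcon
    have hseq : ∀ k : ℕ, ∃ h : EuclideanSpace ℝ (Fin n),
        ‖h‖ < min (1/((k:ℝ)+1)) r₁ ∧ ε * ‖h‖ < ‖g (x + h) - g x - Dg h‖ :=
      fun k => hcon _ (lt_min (by positivity) hr₁)
    choose h hh1 hh2 using hseq
    have hne : ∀ k, h k ≠ 0 := by
      intro k hk0
      have := hh2 k
      rw [hk0] at this
      simp [hDg0] at this
    set t : ℕ → ℝ := fun k => ‖h k‖ with htdef
    have ht0 : ∀ k, 0 < t k := fun k => norm_pos_iff.mpr (hne k)
    set u : ℕ → EuclideanSpace ℝ (Fin n) := fun k => (t k)⁻¹ • h k with hudef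
    have humem : ∀ k, u k ∈ sphere (0:EuclideanSpace ℝ (Fin n)) 1 := by
      intro k
      rw [mem_sphere_zero_iff_norm]
      rw [hudef]
      simp only [norm_smul, Real.norm_eq_abs, abs_of_pos (inv_pos.mpr (ht0 k))]
      exact inv_mul_cancel₀ (ht0 k).ne'
    obtain ⟨u₀, hu₀, φ, hφ, hconv⟩ :=
      (isCompact_sphere (0:EuclideanSpace ℝ (Fin n)) 1).tendsto_subseq humem
    have hu01 : ‖u₀‖ = 1 := mem_sphere_zero_iff_norm.mp hu₀
    have hkey : ∀ k, ε < 2 * L * ‖u k - u₀‖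
        + ‖(t k)⁻¹ • (g (x + t k • u₀) - g x) - Dg u₀‖ := by
      intro k
      set A := ‖(t k)⁻¹ • (g (x + t k • u₀) - g x) - Dg u₀‖ with hAdef
      have hu1 : ‖u k‖ = 1 := mem_sphere_zero_iff_norm.mp (humem k)
      have hhk : h k = t k • u k := by
        rw [hudef]; rw [smul_smul, mul_inv_cancel₀ (ht0 k).ne', one_smul]
      have htr : t k < r₁ := lt_of_lt_of_le (hh1 k) (min_le_right _ _)
      have hm1 : x + t k • u k ∈ Metric.ball x r₁ := by
        rw [Metric.mem_ball, dist_eq_norm, add_sub_cancel_left, norm_smul,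
          Real.norm_eq_abs, abs_of_pos (ht0 k), hu1, mul_one]
        exact htr
      have hm2 : x + t k • u₀ ∈ Metric.ball x r₁ := by
        rw [Metric.mem_ball, dist_eq_norm, add_sub_cancel_left, norm_smul,
          Real.norm_eq_abs, abs_of_pos (ht0 k), hu01, mul_one]
        exact htr
      have e1 : g (x + h k) - g x - Dg (h k) =
          (g (x + t k • u k) - g (x + t k • u₀))
          + (g (x + t k • u₀) - g x - t k • Dg u₀)
          + (t k • Dg u₀ - t k • Dg (u k)) := by
        rw [hhk, hDghom (t k) (ht0 k) (u k)]; abel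
      have b1 : ‖g (x + t k • u k) - g (x + t k • u₀)‖ ≤ (L:ℝ) * (t k * ‖u k - u₀‖) := by
        have hd := hlip.dist_le_mul _ hm1 _ hm2
        rw [dist_eq_norm, dist_eq_norm] at hd
        have : ‖x + t k • u k - (x + t k • u₀)‖ = t k * ‖u k - u₀‖ := by
          rw [show x + t k • u k - (x + t k • u₀) = t k • (u k - u₀) by
            rw [smul_sub]; abel, norm_smul, Real.norm_eq_abs, abs_of_pos (ht0 k)]
        rw [this] at hd
        exact hd
      have b2 : ‖g (x + t k • u₀) - g x - t k • Dg u₀‖ = t k * A := by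
        have : g (x + t k • u₀) - g x - t k • Dg u₀
            = t k • ((t k)⁻¹ • (g (x + t k • u₀) - g x) - Dg u₀) := by
          rw [smul_sub, smul_smul, mul_inv_cancel₀ (ht0 k).ne', one_smul]
        rw [this, norm_smul, Real.norm_eq_abs, abs_of_pos (ht0 k)]
      have b3 : ‖t k • Dg u₀ - t k • Dg (u k)‖ ≤ t k * ((L:ℝ) * ‖u k - u₀‖) := by
        rw [← smul_sub, norm_smul, Real.norm_eq_abs, abs_of_pos (ht0 k)]
        refine mul_le_mul_of_nonneg_left ?_ (ht0 k).le
        calc ‖Dg u₀ - Dg (u k)‖ ≤ (L:ℝ) * ‖u₀ - u k‖ := hDglip u₀ (u k)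
          _ = (L:ℝ) * ‖u k - u₀‖ := by rw [norm_sub_rev]
      have hlt := hh2 k
      rw [e1] at hlt
      have htri : ‖(g (x + t k • u k) - g (x + t k • u₀))
          + (g (x + t k • u₀) - g x - t k • Dg u₀)
          + (t k • Dg u₀ - t k • Dg (u k))‖
          ≤ (L:ℝ) * (t k * ‖u k - u₀‖) + t k * A + t k * ((L:ℝ) * ‖u k - u₀‖) := by
        calc _ ≤ ‖(g (x + t k • u k) - g (x + t k • u₀))
              + (g (x + t k • u₀) - g x - t k • Dg u₀)‖
              + ‖t k • Dg u₀ - t k • Dg (u k)‖ := norm_add_le _ _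
          _ ≤ ‖g (x + t k • u k) - g (x + t k • u₀)‖
              + ‖g (x + t k • u₀) - g x - t k • Dg u₀‖
              + ‖t k • Dg u₀ - t k • Dg (u k)‖ := by
                have := norm_add_le (g (x + t k • u k) - g (x + t k • u₀))
                  (g (x + t k • u₀) - g x - t k • Dg u₀)
                linarith
          _ ≤ _ := by rw [b2]; linarith
      have htk : t k = ‖h k‖ := rfl
      have h1 : ε * t k < (L:ℝ) * (t k * ‖u k - u₀‖) + t k * A + t k * ((L:ℝ) * ‖u k - u₀‖) := by
        rw [htk]
        exact lt_of_lt_of_le hlt htri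
      have h2 : t k * ε < t k * (2 * (L:ℝ) * ‖u k - u₀‖ + A) := by linarith
      exact (mul_lt_mul_iff_right₀ (ht0 k)).mp h2
    -- limits
    have ht_to0 : Tendsto (fun k => t (φ k)) atTop (nhds 0) := by
      refine squeeze_zero (fun k => (ht0 _).le) (fun k => ?_) tendsto_one_div_add_atTop_nhds_zero_nat
      have h1 : t (φ k) < 1 / ((φ k : ℝ) + 1) := lt_of_lt_of_le (hh1 (φ k)) (min_le_left _ _)
      have h2 : (1:ℝ) / ((φ k : ℝ) + 1) ≤ 1 / ((k:ℝ) + 1) := by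
        apply one_div_le_one_div_of_le (by positivity)
        have hkφ : k ≤ φ k := hφ.le_apply
        have : (k:ℝ) ≤ (φ k : ℝ) := Nat.cast_le.mpr hkφ
        linarith
      linarith
    have htt : Tendsto (fun k => t (φ k)) atTop (nhdsWithin 0 (Set.Ioi (0:ℝ))) :=
      tendsto_nhdsWithin_of_tendsto_nhds_of_eventually_within _ ht_to0
        (Eventually.of_forall fun k => ht0 _)
    have hAconv : Tendsto (fun k =>
        ‖(t (φ k))⁻¹ • (g (x + t (φ k) • u₀) - g x) - Dg u₀‖) atTop (nhds 0) := by
      have h1 := ((hDg u₀).comp htt).sub_const (Dg u₀)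
      have h2 := h1.norm
      simpa using h2
    have huconv : Tendsto (fun k => ‖u (φ k) - u₀‖) atTop (nhds 0) :=
      tendsto_iff_norm_sub_tendsto_zero.mp hconv
    have hcomb : Tendsto (fun k => 2 * (L:ℝ) * ‖u (φ k) - u₀‖
        + ‖(t (φ k))⁻¹ • (g (x + t (φ k) • u₀) - g x) - Dg u₀‖) atTop (nhds 0) := by
      have := (huconv.const_mul (2 * (L:ℝ))).add hAconv
      simpa using this
    have hle : ε ≤ 0 := ge_of_tendsto hcomb (Eventually.of_forall fun k => (hkey (φ k)).le)
    linarith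
  -- main argument
  intro ε hε
  obtain ⟨δ₁, hδ₁, hA'⟩ := hA (ε/2) (by linarith)
  obtain ⟨δ₂, hδ₂, hss'⟩ := hss (ε/2) (by linarith)
  refine ⟨min (min δ₁ δ₂) r₁, by positivity, ?_⟩
  intro d hd0 hdδ hdΩ V hV
  have hdδ₁ : ‖d‖ < δ₁ := lt_of_lt_of_le hdδ (le_trans (min_le_left _ _) (min_le_left _ _))
  have hdδ₂ : ‖d‖ < δ₂ := lt_of_lt_of_le hdδ (le_trans (min_le_left _ _) (min_le_right _ _))
  have hdr : ‖d‖ < r₁ := lt_of_lt_of_le hdδ (min_le_right _ _)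
  have hVb : ‖g (x + d) - g x - Matrix.toEuclideanLin V d‖ ≤ ε/2 * ‖d‖ := hss' d hdδ₂ hdΩ V hV
  have hDb : ‖g (x + d) - g x - Dg d‖ ≤ ε/2 * ‖d‖ := hA' d hdδ₁
  have hDV : ‖Dg d - Matrix.toEuclideanLin V d‖ ≤ ε * ‖d‖ := by
    have e : Dg d - Matrix.toEuclideanLin V d
        = (g (x + d) - g x - Matrix.toEuclideanLin V d) - (g (x + d) - g x - Dg d) := by abel
    rw [e]
    calc ‖_ - _‖ ≤ ‖g (x + d) - g x - Matrix.toEuclideanLin V d‖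
        + ‖g (x + d) - g x - Dg d‖ := norm_sub_le _ _
      _ ≤ ε * ‖d‖ := by linarith
  set f : ℝ → ℝ := fun s => θ (x + s • d) - s * ⟪g x, d⟫ - s^2/2 * ⟪Dg d, d⟫ with hfdef
  have hderiv : ∀ s ∈ Set.Icc (0:ℝ) 1,
      HasDerivWithinAt f (⟪g (x + s • d) - g x - s • Dg d, d⟫) (Set.Icc 0 1) s := by
    intro s hs
    have hsd_norm : ‖s • d‖ < r₁ := by
      rw [norm_smul, Real.norm_eq_abs, abs_of_nonneg hs.1]
      calc s * ‖d‖ ≤ 1 * ‖d‖ := mul_le_mul_of_nonneg_right hs.2 (norm_nonneg d)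
        _ = ‖d‖ := one_mul _
        _ < r₁ := hdr
    have hmem : x + s • d ∈ Ω := hballsub (by
      rw [Metric.mem_ball, dist_eq_norm, add_sub_cancel_left]; exact hsd_norm)
    have h1 : HasDerivAt (fun s : ℝ => θ (x + s • d)) (⟪g (x + s • d), d⟫) s := by
      have hc : HasDerivAt (fun s : ℝ => x + s • d) d s := by
        simpa using ((hasDerivAt_id s).smul_const d).const_add x
      have := ((hgrad _ hmem).hasFDerivAt).comp_hasDerivAt s hc
      simpa [InnerProductSpace.toDual_apply_apply, Function.comp_def] using this
    have h2 : HasDerivAt (fun s : ℝ => s * ⟪g x, d⟫) (⟪g x, d⟫) s := by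
      simpa using (hasDerivAt_id s).mul_const (⟪g x, d⟫)
    have h3 : HasDerivAt (fun s : ℝ => s^2/2 * ⟪Dg d, d⟫) (s * ⟪Dg d, d⟫) s := by
      have := ((hasDerivAt_pow 2 s).div_const 2).mul_const (⟪Dg d, d⟫)
      convert this using 1
      · rfl
      · rfl
      · norm_num
    have hD := (h1.sub h2).sub h3
    have heq : ⟪g (x + s • d) - g x - s • Dg d, d⟫
        = ⟪g (x + s • d), d⟫ - ⟪g x, d⟫ - s * ⟪Dg d, d⟫ := by
      rw [inner_sub_left, inner_sub_left, real_inner_smul_left]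
    rw [heq]
    exact hD.hasDerivWithinAt
  have hbound : ∀ s ∈ Set.Icc (0:ℝ) 1,
      ‖⟪g (x + s • d) - g x - s • Dg d, d⟫‖ ≤ ε/2 * ‖d‖^2 := by
    intro s hs
    have hsd : s • Dg d = Dg (s • d) := by
      rcases eq_or_lt_of_le hs.1 with h | h
      · rw [← h]; simp [hDg0]
      · exact (hDghom s h d).symm
    have hsd_norm : ‖s • d‖ ≤ ‖d‖ := by
      rw [norm_smul, Real.norm_eq_abs, abs_of_nonneg hs.1]
      calc s * ‖d‖ ≤ 1 * ‖d‖ := mul_le_mul_of_nonneg_right hs.2 (norm_nonneg d)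
        _ = ‖d‖ := one_mul _
    rw [Real.norm_eq_abs, hsd]
    calc |⟪g (x + s • d) - g x - Dg (s • d), d⟫|
        ≤ ‖g (x + s • d) - g x - Dg (s • d)‖ * ‖d‖ := abs_real_inner_le_norm _ _
      _ ≤ (ε/2 * ‖s • d‖) * ‖d‖ :=
          mul_le_mul_of_nonneg_right (hA' _ (lt_of_le_of_lt hsd_norm hdδ₁)) (norm_nonneg d)
      _ ≤ (ε/2 * ‖d‖) * ‖d‖ := mul_le_mul_of_nonneg_right
          (mul_le_mul_of_nonneg_left hsd_norm (by linarith)) (norm_nonneg d)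
      _ = ε/2 * ‖d‖^2 := by ring
  have hmvt := Convex.norm_image_sub_le_of_norm_hasDerivWithin_le hderiv hbound
    (convex_Icc 0 1) (left_mem_Icc.mpr zero_le_one) (right_mem_Icc.mpr zero_le_one)
  have hf1 : f 1 = θ (x + d) - ⟪g x, d⟫ - 1/2 * ⟪Dg d, d⟫ := by
    rw [hfdef]; norm_num
  have hf0 : f 0 = θ x := by rw [hfdef]; norm_num
  have hmvt' : |f 1 - f 0| ≤ ε/2 * ‖d‖^2 := by
    have : ‖f 1 - f 0‖ ≤ ε/2 * ‖d‖^2 * ‖(1:ℝ) - 0‖ := hmvt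
    rw [Real.norm_eq_abs] at this
    simpa using this
  have hsplit : θ (x + d) - θ x - ⟪g x, d⟫ - (1/2) * ⟪d, Matrix.toEuclideanLin V d⟫
      = (f 1 - f 0) + 1/2 * ⟪Dg d - Matrix.toEuclideanLin V d, d⟫ := by
    rw [hf1, hf0, inner_sub_left, real_inner_comm d (Matrix.toEuclideanLin V d)]
    ring
  rw [hsplit]
  have hsecond : |1/2 * ⟪Dg d - Matrix.toEuclideanLin V d, d⟫| ≤ ε/2 * ‖d‖^2 := by
    rw [abs_mul]
    calc |1/2| * |⟪Dg d - Matrix.toEuclideanLin V d, d⟫|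
        ≤ 1/2 * (‖Dg d - Matrix.toEuclideanLin V d‖ * ‖d‖) := by
          rw [abs_of_pos (by norm_num : (0:ℝ) < 1/2)]
          exact mul_le_mul_of_nonneg_left (abs_real_inner_le_norm _ _) (by norm_num)
      _ ≤ 1/2 * ((ε * ‖d‖) * ‖d‖) := by
          apply mul_le_mul_of_nonneg_left _ (by norm_num)
          exact mul_le_mul_of_nonneg_right hDV (norm_nonneg d)
      _ = ε/2 * ‖d‖^2 := by ring
  calc |(f 1 - f 0) + 1/2 * ⟪Dg d - Matrix.toEuclideanLin V d, d⟫|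
      ≤ |f 1 - f 0| + |1/2 * ⟪Dg d - Matrix.toEuclideanLin V d, d⟫| := abs_add_le _ _
    _ ≤ ε/2 * ‖d‖^2 + ε/2 * ‖d‖^2 := add_le_add hmvt' hsecond
    _ = ε * ‖d‖^2 := by ring
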